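/- arXiv:1505.00772 — 2 statements merged into one kernel-verified Lean document; each statement's English description precedes it below -/
import Mathlib

section
/- Let (λ_j)_{j≥1} be a nonincreasing sequence of positive reals with Σ_{j≥1} λ_j² = 1, and let 0 < α < 1. Define the Renyi entropy R_α = (1−α)^{−1} log(Σ_{j≥1} λ_j^{2α}). Then for every positive integer D, the truncation error ε_D := Σ_{j≥D+1} λ_j² satisfies ε_D ≤ exp((1−α)(R_α − log D)/α). -/
/-! **Statement 0.**
Let `(λ_j)_{j≥1}` be a nonincreasing sequence of positive reals with `Σ_{j≥1} λ_j² = 1`,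
and let `0 < α < 1`.  Define the Renyi entropy `R_α = (1−α)⁻¹ log (Σ_{j≥1} λ_j^{2α})`.
Then for every positive integer `D`, the truncation error `ε_D := Σ_{j≥D+1} λ_j²` satisfies
`ε_D ≤ exp ((1−α) (R_α − log D) / α)`.

We index the sequence by `ℕ`, so that `l j` is the `(j+1)`-st Schmidt coefficient `λ_{j+1}`;
thus `Σ_{j≥D+1} λ_j² = ∑' j : ℕ, (l (j + D))²` and all logarithms are natural. -/
set_option maxHeartbeats 1000000 in
theorem truncation_error_le_of_renyi
    (l : ℕ → ℝ)
    (hpos : ∀ j, 0 < l j)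
    (hmono : ∀ i j, i ≤ j → l j ≤ l i)
    (hsq : Summable fun j => (l j) ^ 2)
    (hnorm : (∑' j, (l j) ^ 2) = 1)
    (α : ℝ) (hα0 : 0 < α) (hα1 : α < 1)
    (hren : Summable fun j => (l j) ^ (2 * α))
    (D : ℕ) (hD : 0 < D) :
    (∑' j : ℕ, (l (j + D)) ^ 2) ≤
      Real.exp ((1 - α) *
        ((1 - α)⁻¹ * Real.log (∑' j, (l j) ^ (2 * α)) - Real.log D) / α) := by
  have h2α : (0:ℝ) < 2 * α := by positivity
  have h1α : (0:ℝ) < 1 - α := by linarith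
  set S := ∑' j, (l j) ^ (2 * α) with hS
  have hterm : ∀ j, 0 < (l j) ^ (2 * α) := fun j => Real.rpow_pos_of_pos (hpos j) _
  have hSpos : 0 < S := Summable.tsum_pos hren (fun j => (hterm j).le) 0 (hterm 0)
  have hDpos : (0:ℝ) < (D : ℝ) := Nat.cast_pos.mpr hD
  -- Step 1 : D * l D ^ (2α) ≤ S
  have hstep1 : (D:ℝ) * (l D) ^ (2 * α) ≤ S := by
    calc (D:ℝ) * (l D) ^ (2 * α) = ∑ _j ∈ Finset.range D, (l D) ^ (2 * α) := by
          rw [Finset.sum_const, Finset.card_range, nsmul_eq_mul]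
      _ ≤ ∑ j ∈ Finset.range D, (l j) ^ (2 * α) := by
          apply Finset.sum_le_sum
          intro j hj
          exact Real.rpow_le_rpow (hpos D).le
            (hmono j D (le_of_lt (Finset.mem_range.mp hj))) h2α.le
      _ ≤ S := Summable.sum_le_tsum _ (fun j _ => (hterm j).le) hren
  have hld : (l D) ^ (2 * α) ≤ S / D := by
    rw [le_div_iff₀ hDpos]
    linarith [hstep1]
  -- tail summability
  have htail2 : Summable fun j => (l (j + D)) ^ 2 := (summable_nat_add_iff D).mpr hsq
  have htailα : Summable fun j => (l (j + D)) ^ (2 * α) := (summable_nat_add_iff D).mpr hren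
  -- pointwise bound
  have hpt : ∀ j : ℕ, (l (j + D)) ^ 2 ≤ (l D) ^ (2 - 2*α) * (l (j + D)) ^ (2 * α) := by
    intro j
    have hle : l (j + D) ≤ l D := hmono D (j + D) (Nat.le_add_left D j)
    have h1 : (l (j + D)) ^ 2 = (l (j + D)) ^ (2 - 2*α) * (l (j + D)) ^ (2 * α) := by
      rw [← Real.rpow_natCast (l (j + D)) 2, ← Real.rpow_add (hpos _)]
      norm_num
    rw [h1]
    apply mul_le_mul_of_nonneg_right _ (hterm _).le
    exact Real.rpow_le_rpow (hpos _).le hle (by linarith)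
  -- tail of α-sum ≤ S
  have htailS : (∑' j, (l (j + D)) ^ (2 * α)) ≤ S := by
    have := Summable.sum_add_tsum_nat_add (f := fun j => (l j) ^ (2 * α)) D hren
    have hnn : 0 ≤ ∑ j ∈ Finset.range D, (l j) ^ (2 * α) :=
      Finset.sum_nonneg fun j _ => (hterm j).le
    linarith
  -- main chain
  have hmain : (∑' j : ℕ, (l (j + D)) ^ 2) ≤ (l D) ^ (2 - 2*α) * S := by
    calc (∑' j : ℕ, (l (j + D)) ^ 2)
        ≤ ∑' j : ℕ, (l D) ^ (2 - 2*α) * (l (j + D)) ^ (2 * α) :=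
          Summable.tsum_le_tsum hpt htail2 (htailα.mul_left _)
      _ = (l D) ^ (2 - 2*α) * ∑' j, (l (j + D)) ^ (2 * α) := tsum_mul_left
      _ ≤ (l D) ^ (2 - 2*α) * S := by
          apply mul_le_mul_of_nonneg_left htailS (Real.rpow_nonneg (hpos D).le _)
  -- bound l D ^ (2-2α) by (S/D)^((1-α)/α)
  have hexp : (l D) ^ (2 - 2*α) ≤ (S / D) ^ ((1 - α)/α) := by
    have h := Real.rpow_le_rpow (Real.rpow_nonneg (hpos D).le _) hld
      (le_of_lt (div_pos h1α hα0))
    rwa [← Real.rpow_mul (hpos D).le, show 2 * α * ((1 - α)/α) = 2 - 2*α by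
      field_simp] at h
  have hX : (∑' j : ℕ, (l (j + D)) ^ 2) ≤ (S / D) ^ ((1 - α)/α) * S := by
    calc (∑' j : ℕ, (l (j + D)) ^ 2) ≤ (l D) ^ (2 - 2*α) * S := hmain
      _ ≤ (S / D) ^ ((1 - α)/α) * S := mul_le_mul_of_nonneg_right hexp hSpos.le
  refine hX.trans (le_of_eq ?_)
  have hXpos : 0 < (S / D) ^ ((1 - α)/α) * S :=
    mul_pos (Real.rpow_pos_of_pos (div_pos hSpos hDpos) _) hSpos
  rw [← Real.exp_log hXpos]
  congr 1
  rw [Real.log_mul (ne_of_gt (Real.rpow_pos_of_pos (div_pos hSpos hDpos) _)) hSpos.ne',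
    Real.log_rpow (div_pos hSpos hDpos), Real.log_div hSpos.ne' hDpos.ne']
  field_simp
  ring
end

section
/- Let H_A and H_B be finite-dimensional complex Hilbert spaces and let |ψ⟩ ∈ H_A ⊗ H_B be a unit vector with Schmidt decomposition |ψ⟩ = Σ_{j≥1} λ_j |l_j⟩ ⊗ |r_j⟩, where λ₁ ≥ λ₂ ≥ ⋯ > 0. For a positive integer D define trunc_D|ψ⟩ = Σ_{j=1}^D λ_j |l_j⟩ ⊗ |r_j⟩ and |ψ'⟩ = trunc_D|ψ⟩ / ‖trunc_D|ψ⟩‖. Then for every unit vector |φ⟩ ∈ H_A ⊗ H_B of Schmidt rank at most D, ⟨ψ'|ψ⟩ ≥ |⟨φ|ψ⟩|. -/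
/-- The standard Hermitian inner product `⟨x|y⟩ = Σ_i conj (x i) * (y i)` on `ι → ℂ`
(conjugate-linear in the first argument). -/
noncomputable def cinner {ι : Type*} [Fintype ι] (x y : ι → ℂ) : ℂ :=
  ∑ i, (starRingEnd ℂ) (x i) * y i

/-- A bipartite vector has Schmidt rank at most `D` iff it is a sum of `D` elementary
tensors. -/
def SchmidtRankLE {ιA ιB : Type*} (D : ℕ) (φ : ιA × ιB → ℂ) : Prop :=
  ∃ (x : Fin D → ιA → ℂ) (y : Fin D → ιB → ℂ), φ = fun p => ∑ j, x j p.1 * y j p.2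

section Aux

variable {ιA ιB ι : Type*} [Fintype ιA] [Fintype ιB] [Fintype ι]

lemma cinner_sum_left {α : Type*} (s : Finset α) (x : α → ι → ℂ) (y : ι → ℂ) :
    cinner (fun i => ∑ j ∈ s, x j i) y = ∑ j ∈ s, cinner (x j) y := by
  simp only [cinner, map_sum, Finset.sum_mul]
  rw [Finset.sum_comm]

lemma cinner_sum_right {α : Type*} (s : Finset α) (x : ι → ℂ) (y : α → ι → ℂ) :
    cinner x (fun i => ∑ j ∈ s, y j i) = ∑ j ∈ s, cinner x (y j) := by
  simp only [cinner, Finset.mul_sum]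
  rw [Finset.sum_comm]

lemma cinner_mul_left (c : ℂ) (x y : ι → ℂ) :
    cinner (fun i => c * x i) y = (starRingEnd ℂ) c * cinner x y := by
  simp only [cinner, map_mul, Finset.mul_sum, mul_assoc]

lemma cinner_mul_right (c : ℂ) (x y : ι → ℂ) :
    cinner x (fun i => c * y i) = c * cinner x y := by
  simp only [cinner, Finset.mul_sum]
  exact Finset.sum_congr rfl fun i _ => by ring

lemma cinner_tensor (f f' : ιA → ℂ) (g g' : ιB → ℂ) :
    cinner (fun p : ιA × ιB => f p.1 * g p.2) (fun p : ιA × ιB => f' p.1 * g' p.2)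
      = cinner f f' * cinner g g' := by
  simp only [cinner]
  rw [Finset.sum_mul_sum, Fintype.sum_prod_type]
  exact Finset.sum_congr rfl fun p _ => Finset.sum_congr rfl fun q _ => by rw [map_mul]; ring

lemma cinner_tensor_sum {α β : Type*} (s : Finset α) (t : Finset β)
    (c : α → ℂ) (d : β → ℂ)
    (f : α → ιA → ℂ) (g : α → ιB → ℂ) (f' : β → ιA → ℂ) (g' : β → ιB → ℂ) :
    cinner (fun p : ιA × ιB => ∑ j ∈ s, c j * f j p.1 * g j p.2)
           (fun p : ιA × ιB => ∑ k ∈ t, d k * f' k p.1 * g' k p.2)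
      = ∑ j ∈ s, ∑ k ∈ t,
          (starRingEnd ℂ) (c j) * d k * (cinner (f j) (f' k) * cinner (g j) (g' k)) := by
  rw [cinner_sum_left]
  refine Finset.sum_congr rfl fun j _ => ?_
  rw [cinner_sum_right]
  refine Finset.sum_congr rfl fun k _ => ?_
  have h1 : (fun p : ιA × ιB => c j * f j p.1 * g j p.2)
      = fun p : ιA × ιB => c j * ((fun q : ιA × ιB => f j q.1 * g j q.2) p) := by
    funext p; ring
  have h2 : (fun p : ιA × ιB => d k * f' k p.1 * g' k p.2)
      = fun p : ιA × ιB => d k * ((fun q : ιA × ιB => f' k q.1 * g' k q.2) p) := by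
    funext p; ring
  rw [h1, h2, cinner_mul_left, cinner_mul_right, cinner_tensor]
  ring

lemma cinner_conj_symm (x y : ι → ℂ) : cinner x y = (starRingEnd ℂ) (cinner y x) := by
  simp only [cinner, map_sum, map_mul, RingHomCompTriple.comp_apply, RingHom.id_apply]
  exact Finset.sum_congr rfl fun i _ => by ring

lemma norm_cinner_comm (x y : ι → ℂ) : ‖cinner x y‖ = ‖cinner y x‖ := by
  rw [cinner_conj_symm]; exact RCLike.norm_conj _

lemma cinner_real_smul_left (c : ℝ) (x y : ι → ℂ) :
    cinner (c • x) y = (c : ℂ) * cinner x y := by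
  simp only [cinner, Pi.smul_apply, Complex.real_smul, map_mul, Complex.conj_ofReal,
    Finset.mul_sum, mul_assoc]

noncomputable def toE {κ : Type*} [Fintype κ] : (κ → ℂ) ≃ₗ[ℂ] EuclideanSpace ℂ κ :=
  (WithLp.linearEquiv 2 ℂ (κ → ℂ)).symm

lemma cinner_eq {κ : Type*} [Fintype κ] (x y : κ → ℂ) :
    cinner x y = inner (𝕜 := ℂ) (toE x) (toE y) := by
  simp [cinner, toE, PiLp.inner_apply, RCLike.inner_apply]
  exact Finset.sum_congr rfl fun i _ => mul_comm _ _

/-- Bessel's inequality phrased with `cinner`. -/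
lemma cinner_bessel {d : ℕ} (u : Fin d → ι → ℂ)
    (hu : ∀ i j, cinner (u i) (u j) = if i = j then 1 else 0) (v : ι → ℂ) :
    ∑ k, ‖cinner (u k) v‖ ^ 2 ≤ (cinner v v).re := by
  have hU : Orthonormal ℂ (fun k => toE (u k)) := by
    rw [orthonormal_iff_ite]
    intro i j
    rw [← cinner_eq, hu]
  have h := hU.sum_inner_products_le (toE v) (s := Finset.univ)
  simp only [← cinner_eq] at h
  refine h.trans ?_
  rw [cinner_eq, ← RCLike.re_to_complex, inner_self_eq_norm_sq]

set_option linter.unusedSectionVars false in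
/-- Any vector of Schmidt rank at most `D` can be written with an orthonormal family of at
most `D` vectors on the left. -/
lemma schmidt_decomp {D : ℕ} (φ : ιA × ιB → ℂ) (h : SchmidtRankLE D φ) :
    ∃ (d : ℕ), d ≤ D ∧ ∃ (u : Fin d → ιA → ℂ) (z : Fin d → ιB → ℂ),
      (∀ i j, cinner (u i) (u j) = if i = j then 1 else 0) ∧
      (∀ p : ιA × ιB, φ p = ∑ k, u k p.1 * z k p.2) := by
  obtain ⟨x, y, hxy⟩ := h
  set X : Fin D → EuclideanSpace ℂ ιA := fun k => toE (x k) with hX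
  set V : Submodule ℂ (EuclideanSpace ℂ ιA) := Submodule.span ℂ (Set.range X) with hV
  have hd : Module.finrank ℂ V ≤ D := by
    simpa [Set.finrank] using finrank_range_le_card (R := ℂ) X
  set d := Module.finrank ℂ V with hdd
  set ob : OrthonormalBasis (Fin d) ℂ V := stdOrthonormalBasis ℂ V with hob
  set u : Fin d → ιA → ℂ := fun k => toE.symm (ob k : EuclideanSpace ℂ ιA) with hu
  have htoEu : ∀ k, toE (u k) = (ob k : EuclideanSpace ℂ ιA) := fun k => by
    simp [hu]
  refine ⟨d, hd, u, fun k q => cinner (u k) (fun p => φ (p, q)), fun i j => ?_, ?_⟩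
  · rw [cinner_eq, htoEu, htoEu, ← Submodule.coe_inner, ← orthonormal_iff_ite.mp ob.orthonormal i j]
  · rintro ⟨p, q⟩
    have hmem : toE (fun p' => φ (p', q)) ∈ V := by
      have : (fun p' => φ (p', q)) = ∑ k, y k q • x k := by
        funext p'
        rw [hxy]
        simp [Finset.sum_apply, Pi.smul_apply, smul_eq_mul, mul_comm]
      rw [this, map_sum]
      exact Submodule.sum_mem _ fun k _ => Submodule.smul_mem _ _
        (Submodule.subset_span (Set.mem_range_self k))
    set w : V := ⟨toE (fun p' => φ (p', q)), hmem⟩ with hw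
    have hrepr := ob.sum_repr w
    have hcoe : ((∑ k, ob.repr w k • ob k : V) : EuclideanSpace ℂ ιA)
        = ∑ k, ob.repr w k • (ob k : EuclideanSpace ℂ ιA) := by
      push_cast
      rfl
    have hcoe2 : ∑ k, ob.repr w k • (ob k : EuclideanSpace ℂ ιA) = toE (fun p' => φ (p', q)) := by
      rw [← hcoe, hrepr]
    have hfun : (fun p' => φ (p', q)) = ∑ k, ob.repr w k • u k := by
      apply toE.injective
      rw [map_sum]
      simp only [map_smul, htoEu]
      exact hcoe2.symm
    have hreprk : ∀ k, ob.repr w k = cinner (u k) (fun p' => φ (p', q)) := fun k => by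
      rw [ob.repr_apply_apply, Submodule.coe_inner, cinner_eq, htoEu]
    conv_lhs => rw [show φ (p, q) = (fun p' => φ (p', q)) p from rfl, hfun]
    rw [Finset.sum_apply]
    exact Finset.sum_congr rfl fun k _ => by
      rw [Pi.smul_apply, smul_eq_mul, hreprk k, mul_comm]

/-- Cauchy–Schwarz for finite sums of complex numbers. -/
lemma cs_complex {κ : Type*} (s : Finset κ) (x y : κ → ℂ) :
    ‖∑ i ∈ s, x i * y i‖ ≤ Real.sqrt (∑ i ∈ s, ‖x i‖ ^ 2) * Real.sqrt (∑ i ∈ s, ‖y i‖ ^ 2) := by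
  calc ‖∑ i ∈ s, x i * y i‖ ≤ ∑ i ∈ s, ‖x i‖ * ‖y i‖ := by
        refine (norm_sum_le _ _).trans ?_
        exact le_of_eq (Finset.sum_congr rfl fun i _ => norm_mul _ _)
  _ ≤ _ := Real.sum_mul_le_sqrt_mul_sqrt s _ _

/-- The key weight-redistribution inequality. -/
lemma key_weight {M D : ℕ} (lam : Fin M → ℝ) (hpos : ∀ j, 0 < lam j)
    (hmono : ∀ i j : Fin M, i ≤ j → lam j ≤ lam i)
    (p : Fin M → ℝ) (hp0 : ∀ j, 0 ≤ p j) (hp1 : ∀ j, p j ≤ 1)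
    (hsum : ∑ j, p j ≤ (D : ℝ)) :
    ∑ j, lam j ^ 2 * p j ≤ ∑ j ∈ Finset.univ.filter (fun j : Fin M => (j : ℕ) < D),
      lam j ^ 2 := by
  set T := Finset.univ.filter (fun j : Fin M => (j : ℕ) < D) with hT
  by_cases hMD : M ≤ D
  · have hTu : T = Finset.univ := by
      rw [hT]
      refine Finset.filter_true_of_mem fun j _ => ?_
      exact lt_of_lt_of_le j.isLt hMD
    rw [hTu]
    refine Finset.sum_le_sum fun j _ => ?_
    nlinarith [hpos j, hp0 j, hp1 j]
  · push_neg at hMD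
    set jD : Fin M := ⟨D, hMD⟩ with hjD
    set t := lam jD ^ 2 with ht
    have ht0 : 0 ≤ t := sq_nonneg _
    have hcard : T.card = D := by
      have : T = Finset.Iio jD := by
        ext j
        simp [hT, hjD, Fin.lt_def]
      rw [this, Fin.card_Iio]
    have hsplit := Finset.sum_filter_add_sum_filter_not Finset.univ
      (fun j : Fin M => (j : ℕ) < D) (fun j => lam j ^ 2 * p j)
    have hptot := Finset.sum_filter_add_sum_filter_not Finset.univ
      (fun j : Fin M => (j : ℕ) < D) p
    have h1 : ∑ j ∈ T, lam j ^ 2 * p j ≤ ∑ j ∈ T, (lam j ^ 2 + t * (p j - 1)) := by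
      refine Finset.sum_le_sum fun j hj => ?_
      have hjlt : (j : ℕ) < D := by simpa [hT] using hj
      have hle : lam jD ≤ lam j := hmono j jD (by simp [Fin.le_def, hjD]; omega)
      have hsq : t ≤ lam j ^ 2 := by nlinarith [hpos jD]
      nlinarith [hp1 j]
    have h2 : ∑ j ∈ Finset.univ.filter (fun j : Fin M => ¬ (j : ℕ) < D), lam j ^ 2 * p j
        ≤ ∑ j ∈ Finset.univ.filter (fun j : Fin M => ¬ (j : ℕ) < D), t * p j := by
      refine Finset.sum_le_sum fun j hj => ?_
      have hjge : D ≤ (j : ℕ) := by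
        have := Finset.mem_filter.mp hj
        omega
      have hle : lam j ≤ lam jD := hmono jD j (by simp [Fin.le_def, hjD]; omega)
      have hsq : lam j ^ 2 ≤ t := by nlinarith [hpos j]
      nlinarith [hp0 j]
    have e1 : ∑ j ∈ T, (lam j ^ 2 + t * (p j - 1))
        = ∑ j ∈ T, lam j ^ 2 + t * (∑ j ∈ T, p j - D) := by
      rw [Finset.sum_add_distrib, ← Finset.mul_sum, Finset.sum_sub_distrib,
        Finset.sum_const, hcard]
      simp
    have e2 : ∑ j ∈ Finset.univ.filter (fun j : Fin M => ¬ (j : ℕ) < D), t * p j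
        = t * ∑ j ∈ Finset.univ.filter (fun j : Fin M => ¬ (j : ℕ) < D), p j :=
      (Finset.mul_sum _ _ _).symm
    have hneg : t * (∑ j ∈ T, p j - D) + t * ∑ j ∈ Finset.univ.filter
        (fun j : Fin M => ¬ (j : ℕ) < D), p j ≤ 0 := by
      have : (∑ j ∈ T, p j - D) + ∑ j ∈ Finset.univ.filter
          (fun j : Fin M => ¬ (j : ℕ) < D), p j ≤ 0 := by
        rw [hT] at *
        linarith [hptot, hsum]
      nlinarith
    rw [hT] at *
    linarith [hsplit, h1, h2, e1, e2, hneg]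

end Aux

theorem eckart_young {ιA ιB : Type*} [Fintype ιA] [Fintype ιB]
    (M : ℕ)
    (lam : Fin M → ℝ) (hpos : ∀ j, 0 < lam j)
    (hmono : ∀ i j : Fin M, i ≤ j → lam j ≤ lam i)
    (l : Fin M → ιA → ℂ) (r : Fin M → ιB → ℂ)
    (hl : ∀ i j, cinner (l i) (l j) = if i = j then 1 else 0)
    (hr : ∀ i j, cinner (r i) (r j) = if i = j then 1 else 0)
    (ψ : ιA × ιB → ℂ)
    (hψ : ψ = fun p => ∑ j, (lam j : ℂ) * l j p.1 * r j p.2)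
    (hψunit : cinner ψ ψ = 1)
    (D : ℕ) (hD : 0 < D) :
    ∀ φ : ιA × ιB → ℂ, cinner φ φ = 1 → SchmidtRankLE D φ →
      letI trunc : ιA × ιB → ℂ := fun p =>
        ∑ j ∈ Finset.univ.filter (fun j : Fin M => (j : ℕ) < D),
          (lam j : ℂ) * l j p.1 * r j p.2
      letI ψ' : ιA × ιB → ℂ := (Real.sqrt ((cinner trunc trunc).re))⁻¹ • trunc
      ‖cinner φ ψ‖ ≤ (cinner ψ' ψ).re := by
  intro φ hφunit hφrank
  set T := Finset.univ.filter (fun j : Fin M => (j : ℕ) < D) with hT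
  set trunc : ιA × ιB → ℂ := fun p => ∑ j ∈ T, (lam j : ℂ) * l j p.1 * r j p.2 with htrunc
  set S : ℝ := ∑ j ∈ T, lam j ^ 2 with hS
  -- M is positive
  have hM : 0 < M := by
    rcases Nat.eq_zero_or_pos M with h0 | h; swap; · exact h
    exfalso
    subst h0
    rw [hψ] at hψunit
    simp [cinner] at hψunit
  -- S is positive
  have hS0 : 0 < S := by
    have hmem : (⟨0, hM⟩ : Fin M) ∈ T := by simp [hT, hD]
    have h1 : lam ⟨0, hM⟩ ^ 2 ≤ ∑ j ∈ T, lam j ^ 2 :=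
      Finset.single_le_sum (fun j _ => sq_nonneg (lam j)) hmem
    have hp := hpos ⟨0, hM⟩
    rw [hS]
    nlinarith
  -- a diagonal-sum helper
  have diag : ∀ (s : Finset (Fin M)), ∀ j ∈ s,
      (∑ k ∈ s, (starRingEnd ℂ) ((lam j : ℂ)) * (lam k : ℂ) *
        (cinner (l j) (l k) * cinner (r j) (r k))) = (lam j : ℂ) * (lam j : ℂ) := by
    intro s j hj
    have hterm : ∀ k ∈ s, (starRingEnd ℂ) ((lam j : ℂ)) * (lam k : ℂ) *
        (cinner (l j) (l k) * cinner (r j) (r k))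
        = if j = k then (lam j : ℂ) * (lam k : ℂ) else 0 := fun k _ => by
      rw [hl, hr, Complex.conj_ofReal]
      by_cases h : j = k <;> simp [h]
    rw [Finset.sum_congr rfl hterm, Finset.sum_ite_eq, if_pos hj]
  have hSC : (∑ j ∈ T, (lam j : ℂ) * (lam j : ℂ)) = (S : ℂ) := by
    rw [hS]
    push_cast
    exact Finset.sum_congr rfl fun j _ => by ring
  -- trunc inner products
  have htt : cinner trunc trunc = (S : ℂ) := by
    rw [htrunc, cinner_tensor_sum T T (fun j => (lam j : ℂ)) (fun j => (lam j : ℂ)) l r l r]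
    rw [Finset.sum_congr rfl (diag T)]
    exact hSC
  have htψ : cinner trunc ψ = (S : ℂ) := by
    rw [htrunc, hψ,
      cinner_tensor_sum T Finset.univ (fun j => (lam j : ℂ)) (fun j => (lam j : ℂ)) l r l r]
    rw [Finset.sum_congr rfl fun j _ => diag Finset.univ j (Finset.mem_univ j)]
    exact hSC
  -- RHS equals sqrt S
  have hRHS : (cinner ((Real.sqrt ((cinner trunc trunc).re))⁻¹ • trunc) ψ).re
      = Real.sqrt S := by
    rw [htt, cinner_real_smul_left, htψ, Complex.ofReal_re, ← Complex.ofReal_mul,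
      Complex.ofReal_re]
    rw [inv_mul_eq_div, Real.div_sqrt]
  rw [hRHS]
  -- decompose φ
  obtain ⟨d, hdD, u, z, hu, hφeq⟩ := schmidt_decomp φ hφrank
  have hφfun : φ = fun p : ιA × ιB => ∑ k, (1 : ℂ) * u k p.1 * z k p.2 := by
    funext p
    rw [hφeq p]
    exact Finset.sum_congr rfl fun k _ => by ring
  -- expansion of ⟨φ, ψ⟩
  have hφψ : cinner φ ψ = ∑ x : Fin d × Fin M,
      ((lam x.2 : ℂ) * cinner (u x.1) (l x.2)) * cinner (z x.1) (r x.2) := by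
    rw [hφfun, hψ, cinner_tensor_sum Finset.univ Finset.univ (fun _ => (1 : ℂ))
      (fun j => (lam j : ℂ)) u z l r, Fintype.sum_prod_type]
    refine Finset.sum_congr rfl fun k _ => Finset.sum_congr rfl fun j _ => ?_
    rw [map_one]
    ring
  -- the p-weights
  set P : Fin M → ℝ := fun j => ∑ k, ‖cinner (u k) (l j)‖ ^ 2 with hP
  have hP0 : ∀ j, 0 ≤ P j := fun j => Finset.sum_nonneg fun k _ => sq_nonneg _
  have hP1 : ∀ j, P j ≤ 1 := fun j => by
    have := cinner_bessel u hu (l j)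
    rw [hl j j] at this
    simpa using this
  have hPsum : ∑ j, P j ≤ (D : ℝ) := by
    rw [hP]
    rw [Finset.sum_comm]
    have hk : ∀ k : Fin d, (∑ j, ‖cinner (u k) (l j)‖ ^ 2) ≤ 1 := fun k => by
      have hb := cinner_bessel l hl (u k)
      rw [hu k k] at hb
      simp only [norm_cinner_comm]
      simpa using hb
    calc (∑ k : Fin d, ∑ j, ‖cinner (u k) (l j)‖ ^ 2) ≤ ∑ _k : Fin d, (1 : ℝ) :=
          Finset.sum_le_sum fun k _ => hk k
    _ = d := by simp
    _ ≤ D := by exact_mod_cast hdD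
  -- the B-sum
  have hφφ : cinner φ φ = ∑ k, cinner (z k) (z k) := by
    rw [hφfun, cinner_tensor_sum Finset.univ Finset.univ (fun _ => (1 : ℂ))
      (fun _ => (1 : ℂ)) u z u z]
    refine Finset.sum_congr rfl fun k _ => ?_
    have hterm : ∀ k' ∈ (Finset.univ : Finset (Fin d)),
        (starRingEnd ℂ) (1 : ℂ) * 1 * (cinner (u k) (u k') * cinner (z k) (z k'))
        = if k = k' then cinner (z k) (z k') else 0 := fun k' _ => by
      rw [hu]
      by_cases h : k = k' <;> simp [h]
    rw [Finset.sum_congr rfl hterm, Finset.sum_ite_eq, if_pos (Finset.mem_univ k)]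
  have hB : (∑ x : Fin d × Fin M, ‖cinner (z x.1) (r x.2)‖ ^ 2) ≤ 1 := by
    rw [Fintype.sum_prod_type]
    have hk : ∀ k : Fin d, (∑ j, ‖cinner (z k) (r j)‖ ^ 2) ≤ (cinner (z k) (z k)).re :=
      fun k => by
        have hb := cinner_bessel r hr (z k)
        simp only [norm_cinner_comm]
        simpa using hb
    calc (∑ k : Fin d, ∑ j, ‖cinner (z k) (r j)‖ ^ 2)
        ≤ ∑ k, (cinner (z k) (z k)).re := Finset.sum_le_sum fun k _ => hk k
    _ = (cinner φ φ).re := by rw [hφφ, Complex.re_sum]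
    _ = 1 := by rw [hφunit]; simp
  -- the A-sum
  have hA : (∑ x : Fin d × Fin M, ‖(lam x.2 : ℂ) * cinner (u x.1) (l x.2)‖ ^ 2)
      = ∑ j, lam j ^ 2 * P j := by
    rw [Fintype.sum_prod_type, Finset.sum_comm, hP]
    refine Finset.sum_congr rfl fun j _ => ?_
    rw [Finset.mul_sum]
    refine Finset.sum_congr rfl fun k _ => ?_
    rw [norm_mul, Complex.norm_real, Real.norm_eq_abs, abs_of_pos (hpos j), mul_pow]
  -- assemble
  have hcs := cs_complex Finset.univ
    (fun x : Fin d × Fin M => (lam x.2 : ℂ) * cinner (u x.1) (l x.2))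
    (fun x : Fin d × Fin M => cinner (z x.1) (r x.2))
  rw [← hφψ] at hcs
  refine hcs.trans ?_
  rw [hA]
  have h1 := key_weight lam hpos hmono P hP0 hP1 hPsum
  calc Real.sqrt (∑ j, lam j ^ 2 * P j) *
        Real.sqrt (∑ x : Fin d × Fin M, ‖cinner (z x.1) (r x.2)‖ ^ 2)
      ≤ Real.sqrt S * Real.sqrt 1 := by
        refine mul_le_mul (Real.sqrt_le_sqrt ?_) (Real.sqrt_le_sqrt hB)
          (Real.sqrt_nonneg _) (Real.sqrt_nonneg _)
        rw [← hT] at h1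
        exact h1.trans_eq hS.symm
  _ = Real.sqrt S := by rw [Real.sqrt_one, mul_one]
end
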